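/- For all real numbers a, b, and φ, the integral over θ in [0, 2π] of e^{i(a cos(θ−φ) − b sin(θ−φ))} dθ equals 2π J₀(a) J₀(b) + 4π ∑_{q=1}^∞ (−1)^q J_{2q}(a) J_{2q}(b). -/

import Mathlib

set_option maxHeartbeats 1000000

open Real MeasureTheory

/-- Bessel function of the first kind of order `n`. -/
noncomputable def besselJ (n : ℕ) (x : ℝ) : ℝ :=
  ∑' m : ℕ, (-1 : ℝ) ^ m * (x / 2) ^ (2 * m + n) / (m.factorial * (m + n).factorial)

section Aux
open Polynomial Finset intervalIntegral


lemma helper1 (N v : ℕ) : ((1 - X : Polynomial ℤ)^N).coeff v = (-1:ℤ)^v * N.choose v := by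
  have h : (1 - X : Polynomial ℤ) = (-X) + 1 := by ring
  rw [h, add_pow]
  rw [finset_sum_coeff]
  have hterm : ∀ k ∈ range (N+1), ((-X:ℤ[X])^k * 1^(N-k) * (N.choose k : ℤ[X])).coeff v
      = if k = v then (-1:ℤ)^v * N.choose v else 0 := by
    intro k _
    rw [one_pow, mul_one, neg_pow, mul_assoc, ← C_eq_natCast, ← C_1, ← C_neg, ← C_pow, coeff_C_mul,
      coeff_mul_C, coeff_X_pow]
    by_cases hkv : k = v
    · subst hkv; simp
    · simp [hkv, Ne.symm hkv]
  rw [Finset.sum_congr rfl hterm, Finset.sum_ite_eq' (range (N+1)) v]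
  by_cases hv : v ∈ range (N+1)
  · simp [hv]
  · simp only [hv, if_false]
    have : N < v := by simpa using hv
    rw [Nat.choose_eq_zero_of_lt this]; simp

lemma helper2 (N j : ℕ) (hj : j ≤ N) :
    ((1 - X^2 : Polynomial ℤ)^N).coeff (2*j) = (-1:ℤ)^j * N.choose j := by
  have h : (1 - X^2 : Polynomial ℤ) = (-X^2) + 1 := by ring
  rw [h, add_pow, finset_sum_coeff]
  have hterm : ∀ k ∈ range (N+1), ((-X^2:ℤ[X])^k * 1^(N-k) * (N.choose k : ℤ[X])).coeff (2*j)
      = if k = j then (-1:ℤ)^j * N.choose j else 0 := by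
    intro k _
    rw [one_pow, mul_one, neg_pow, ← pow_mul, mul_assoc, ← C_eq_natCast, ← C_1, ← C_neg, ← C_pow,
      coeff_C_mul, coeff_mul_C, coeff_X_pow]
    by_cases hkv : k = j
    · subst hkv; simp [mul_comm]
    · have h2 : ¬ (2*j = k*2) := by omega
      simp [hkv, h2]
      exact fun h3 => absurd h3.symm hkv
  rw [Finset.sum_congr rfl hterm, Finset.sum_ite_eq' (range (N+1)) j]
  simp [Nat.lt_succ_of_le hj]

lemma aux_poly (N j : ℕ) (hj : j ≤ N) :
    ∑ u ∈ Finset.range (2*j+1), (-1:ℤ)^u * (N.choose u) * (N.choose (2*j-u))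
      = (-1:ℤ)^j * N.choose j := by
  have key : ((1-X)^N * (1+X)^N : Polynomial ℤ) = (1 - X^2)^N := by
    rw [← mul_pow]; ring_nf
  have h2 := congrArg (fun p => Polynomial.coeff p (2*j)) key
  simp only [coeff_mul, Finset.Nat.sum_antidiagonal_eq_sum_range_succ_mk, helper1,
    coeff_one_add_X_pow, helper2 N j hj] at h2
  rw [← h2]

lemma identity_int (j k : ℕ) (h : j ≤ k) :
    ∑ q ∈ Finset.range (j+1), (if q = 0 then (1:ℤ) else 2) *
      ((-1:ℤ)^q * ((j+k).choose (j-q)) * ((j+k).choose (j+q))) = (j+k).choose j := by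
  set N := j + k with hN
  set f : ℕ → ℤ := fun u => (-1:ℤ)^u * (N.choose u) * (N.choose (2*j-u)) with hf
  have P : ∑ u ∈ Finset.range (2*j+1), f u = (-1:ℤ)^j * N.choose j := aux_poly N j (by omega)
  have hsplit : ∑ u ∈ Finset.range (2*j+1), f u
      = ∑ u ∈ Finset.range (j+1), f u + ∑ u ∈ Finset.Ico (j+1) (2*j+1), f u := by
    rw [Finset.range_eq_Ico, Finset.range_eq_Ico]
    exact (Finset.sum_Ico_consecutive f (by omega : 0 ≤ j+1) (by omega : j+1 ≤ 2*j+1)).symm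
  have hIco : ∑ u ∈ Finset.Ico (j+1) (2*j+1), f u = ∑ u ∈ Finset.range j, f (j+1+u) := by
    rw [Finset.sum_Ico_eq_sum_range]
    simp only [show 2*j+1-(j+1) = j from by omega]
  have hsym : ∀ u ∈ Finset.range j, f (j+1+u) = f (j-(u+1)) := by
    intro u hu
    have hu' : u < j := Finset.mem_range.mp hu
    simp only [hf]
    rw [show 2*j - (j+1+u) = j - (u+1) from by omega,
        show 2*j - (j-(u+1)) = j+1+u from by omega,
        show (-1:ℤ)^(j+1+u) = (-1)^(j-(u+1)) from by
          rw [show j+1+u = (j-(u+1)) + 2*(u+1) from by omega, pow_add, pow_mul]; norm_num]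
    ring
  have hrefl : ∑ u ∈ Finset.range (j+1), f u = ∑ q ∈ Finset.range (j+1), f (j - q) := by
    rw [← Finset.sum_range_reflect]
    exact Finset.sum_congr rfl fun q hq => by simp
  have hsucc : ∑ q ∈ Finset.range (j+1), f (j-q)
      = ∑ q ∈ Finset.range j, f (j-(q+1)) + f j := by
    rw [Finset.sum_range_succ']
    simp
  have P2 : (∑ q ∈ Finset.range j, f (j-(q+1)) + f j) + ∑ u ∈ Finset.range j, f (j-(u+1))
      = (-1:ℤ)^j * N.choose j := by
    rw [← hsucc, ← hrefl, ← Finset.sum_congr rfl hsym, ← hIco, ← hsplit, P]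
  have hg : ∀ q, q ≤ j → (-1:ℤ)^q * (N.choose (j-q)) * (N.choose (j+q)) = (-1:ℤ)^j * f (j-q) := by
    intro q hq
    simp only [hf]
    rw [show 2*j - (j-q) = j+q from by omega,
        show (-1:ℤ)^q = (-1)^j * (-1)^(j-q) from by
          rw [← pow_add, show j + (j - q) = q + 2*(j-q) from by omega, pow_add, pow_mul]; norm_num]
    ring
  have hsq : (-1:ℤ)^j * (-1:ℤ)^j = 1 := by rw [← pow_add, ← two_mul, pow_mul]; norm_num
  rw [Finset.sum_range_succ']
  rw [Finset.sum_congr rfl (fun q (hq : q ∈ Finset.range j) => by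
        rw [if_neg (Nat.succ_ne_zero q), hg (q+1) (by have := Finset.mem_range.mp hq; omega)]),
      if_pos rfl, one_mul, hg 0 (by omega)]
  have expand : ∑ x ∈ Finset.range j, 2 * ((-1:ℤ)^j * f (j - (x+1)))
      = 2 * ((-1:ℤ)^j * ∑ x ∈ Finset.range j, f (j - (x+1))) := by
    rw [Finset.mul_sum, Finset.mul_sum]
  have hjj : f (j - 0) = f j := by norm_num
  rw [expand, hjj]
  linear_combination ((-1:ℤ)^j) * P2 + (N.choose j : ℤ) * hsq

lemma identity_real_aux (j k : ℕ) (hjk : j ≤ k) :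
    ∑ q ∈ Finset.range (j + 1),
      (if q = 0 then (1:ℝ) else 2) * (-1:ℝ)^q /
        (((j-q).factorial * (j+q).factorial : ℕ) * ((k-q).factorial * (k+q).factorial : ℕ))
      = 1 / ((j.factorial * k.factorial : ℕ) * ((j+k).factorial : ℕ)) := by
  have base := identity_int j k hjk
  have baseR : ∑ q ∈ Finset.range (j+1), (if q = 0 then (1:ℝ) else 2) *
      ((-1:ℝ)^q * ((j+k).choose (j-q)) * ((j+k).choose (j+q))) = ((j+k).choose j : ℝ) := by
    have h2 := congrArg (fun z : ℤ => (z : ℝ)) base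
    push_cast at h2
    exact h2
  have hterm : ∀ q ∈ Finset.range (j+1),
      (if q = 0 then (1:ℝ) else 2) * (-1:ℝ)^q /
        (((j-q).factorial * (j+q).factorial : ℕ) * ((k-q).factorial * (k+q).factorial : ℕ))
      = ((if q = 0 then (1:ℝ) else 2) * ((-1:ℝ)^q * ((j+k).choose (j-q)) * ((j+k).choose (j+q))))
        / (((j+k).factorial : ℕ) * ((j+k).factorial : ℕ)) := by
    intro q hq
    have hq' : q ≤ j := by have := Finset.mem_range.mp hq; omega
    rw [Nat.cast_choose ℝ (show j - q ≤ j + k by omega),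
        Nat.cast_choose ℝ (show j + q ≤ j + k by omega),
        show j + k - (j - q) = k + q from by omega,
        show j + k - (j + q) = k - q from by omega]
    have h1 : ((j-q).factorial : ℝ) ≠ 0 := Nat.cast_ne_zero.mpr (Nat.factorial_ne_zero _)
    have h2 : ((j+q).factorial : ℝ) ≠ 0 := Nat.cast_ne_zero.mpr (Nat.factorial_ne_zero _)
    have h3 : ((k-q).factorial : ℝ) ≠ 0 := Nat.cast_ne_zero.mpr (Nat.factorial_ne_zero _)
    have h4 : ((k+q).factorial : ℝ) ≠ 0 := Nat.cast_ne_zero.mpr (Nat.factorial_ne_zero _)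
    have h5 : (((j+k)).factorial : ℝ) ≠ 0 := Nat.cast_ne_zero.mpr (Nat.factorial_ne_zero _)
    push_cast
    field_simp
  rw [Finset.sum_congr rfl hterm, ← Finset.sum_div, baseR,
      Nat.cast_choose ℝ (show j ≤ j + k from by omega), show j + k - j = k from by omega]
  have h1 : (j.factorial : ℝ) ≠ 0 := Nat.cast_ne_zero.mpr (Nat.factorial_ne_zero _)
  have h2 : (k.factorial : ℝ) ≠ 0 := Nat.cast_ne_zero.mpr (Nat.factorial_ne_zero _)
  have h5 : (((j+k)).factorial : ℝ) ≠ 0 := Nat.cast_ne_zero.mpr (Nat.factorial_ne_zero _)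
  push_cast
  field_simp

lemma identity_real (j k : ℕ) :
    ∑ q ∈ Finset.range (min j k + 1),
      (if q = 0 then (1:ℝ) else 2) * (-1:ℝ)^q /
        (((j-q).factorial * (j+q).factorial : ℕ) * ((k-q).factorial * (k+q).factorial : ℕ))
      = 1 / ((j.factorial * k.factorial : ℕ) * ((j+k).factorial : ℕ)) := by
  rcases le_total j k with h | h
  · rw [min_eq_left h]; exact identity_real_aux j k h
  · rw [min_eq_right h]
    have h0 := identity_real_aux k j h
    rw [Nat.add_comm k j, Nat.mul_comm (k.factorial) (j.factorial)] at h0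
    rw [← h0]
    exact Finset.sum_congr rfl fun q hq => by
      rw [mul_comm ((((j - q).factorial * (j + q).factorial : ℕ)) : ℝ)]

lemma integral_exp_int_ne (n : ℤ) (hn : n ≠ 0) :
    ∫ θ in (0:ℝ)..(2*π), Complex.exp ((n * Complex.I) * θ) = 0 := by
  have hc : (n : ℂ) * Complex.I ≠ 0 := by
    simp [Complex.I_ne_zero, Int.cast_ne_zero, hn]
  rw [integral_exp_mul_complex hc]
  have h1 : Complex.exp ((n * Complex.I) * (2*π:ℝ)) = 1 := by
    rw [show ((n:ℂ) * Complex.I) * (2*π:ℝ) = n * (2*π*Complex.I) by push_cast; ring]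
    exact Complex.exp_int_mul_two_pi_mul_I n
  rw [h1]
  simp

lemma integral_exp_int_zero :
    ∫ θ in (0:ℝ)..(2*π), Complex.exp (((0:ℤ) * Complex.I) * θ) = 2*π := by
  simp

lemma integral_exp_int (n : ℤ) :
    ∫ θ in (0:ℝ)..(2*π), Complex.exp ((n * Complex.I) * θ)
      = if n = 0 then (2*π:ℝ) else 0 := by
  split
  · next h => subst h; simpa using integral_exp_int_zero
  · next h => exact integral_exp_int_ne n h

lemma cos_pow_expand (n : ℕ) (θ : ℝ) :
    (Real.cos θ : ℂ)^n
      = ∑ k ∈ Finset.range (n+1),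
          Complex.exp ((((2*k - n : ℤ)):ℂ) * Complex.I * θ) * ((n.choose k : ℝ) / 2^n) := by
  have h2 : (Real.cos θ:ℂ) = (Complex.exp (θ*Complex.I) + Complex.exp (-θ*Complex.I))/2 := by
    rw [Complex.ofReal_cos, eq_div_iff (two_ne_zero' ℂ), mul_comm]
    exact Complex.two_cos _
  rw [h2, div_pow, add_pow]
  rw [Finset.sum_div]
  apply Finset.sum_congr rfl
  intro k hk
  have hk' : k ≤ n := by have := Finset.mem_range.mp hk; omega
  rw [← Complex.exp_nat_mul, ← Complex.exp_nat_mul, ← Complex.exp_add]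
  have harg : (k:ℂ) * (θ*Complex.I) + ((n-k:ℕ):ℂ) * (-θ*Complex.I)
      = (((2*k - n : ℤ)):ℂ) * Complex.I * θ := by
    rw [Nat.cast_sub hk']
    push_cast
    ring
  rw [harg]
  push_cast
  ring

lemma integral_cos_pow_complex (n : ℕ) :
    ∫ θ in (0:ℝ)..(2*π), (Real.cos θ : ℂ)^n
      = if Even n then (((n.choose (n/2) : ℝ) * (2*π) / 2^n : ℝ) : ℂ) else 0 := by
  simp only [cos_pow_expand n]
  rw [intervalIntegral.integral_finset_sum]
  · have heach : ∀ k ∈ Finset.range (n+1),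
        (∫ θ in (0:ℝ)..(2*π), Complex.exp ((((2*k - n : ℤ)):ℂ) * Complex.I * θ) * ((n.choose k : ℝ) / 2^n))
        = (if (2*(k:ℤ) - n) = 0 then ((2*π:ℝ):ℂ) else 0) * ((n.choose k : ℝ) / 2^n) := by
      intro k hk
      rw [intervalIntegral.integral_mul_const, integral_exp_int]
      split <;> simp
    rw [Finset.sum_congr rfl heach]
    by_cases hn : Even n
    · obtain ⟨m, hm⟩ := hn
      have hm' : n = 2*m := by omega
      subst hm'
      simp only [ite_mul, zero_mul]
      have hcond : ∀ kk : ℕ, ((2 * (kk:ℤ) - ((2*m:ℕ):ℤ)) = 0) = (kk = m) := by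
        intro kk; apply propext; omega
      simp only [hcond]
      rw [Finset.sum_ite_eq' (Finset.range (2*m+1)) m]
      rw [if_pos (Finset.mem_range.mpr (by omega : m < 2*m+1)),
        if_pos (show Even (2*m) from ⟨m, by omega⟩), show (2*m)/2 = m from by omega]
      push_cast
      ring
    · rw [if_neg hn]
      apply Finset.sum_eq_zero
      intro k hk
      have hne : ¬ ((2*(k:ℤ) - n) = 0) := by
        intro hc
        exact hn ⟨k, by omega⟩
      rw [if_neg hne, zero_mul]
  · intro k hk
    apply Continuous.intervalIntegrable
    fun_prop

lemma exp_eq_tsum' (z : ℂ) : Complex.exp z = ∑' n : ℕ, z^n / n.factorial := by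
  rw [Complex.exp_eq_exp_ℂ, NormedSpace.exp_eq_tsum_div]

lemma integral_exp_I_cos (R : ℝ) :
    ∫ θ in (0:ℝ)..(2*π), Complex.exp (Complex.I * ((R * Real.cos θ : ℝ) : ℂ))
      = ((2*π * ∑' m : ℕ, (-1:ℝ)^m * (R/2)^(2*m) / (m.factorial * m.factorial) : ℝ) : ℂ) := by
  have h2pi : (0:ℝ) ≤ 2*π := by positivity
  have hcont : ∀ n : ℕ, Continuous fun θ:ℝ => (Complex.I * ((R * Real.cos θ : ℝ):ℂ))^n / n.factorial := by
    intro n; fun_prop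
  have hInt : ∀ n : ℕ, Integrable (fun θ:ℝ => (Complex.I * ((R * Real.cos θ : ℝ):ℂ))^n / n.factorial)
      (volume.restrict (Set.Ioc 0 (2*π))) := fun n => (hcont n).integrableOn_Ioc
  have hnorm : ∀ n : ℕ, ∀ θ : ℝ, ‖(Complex.I * ((R * Real.cos θ : ℝ):ℂ))^n / n.factorial‖
      ≤ |R|^n / n.factorial := by
    intro n θ
    have h1 : ‖Complex.I * ((R * Real.cos θ:ℝ):ℂ)‖ = |R * Real.cos θ| := by
      rw [norm_mul, Complex.norm_I, one_mul, Complex.norm_real, Real.norm_eq_abs]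
    have h2 : |R * Real.cos θ| ≤ |R| := by
      rw [abs_mul]
      nlinarith [Real.abs_cos_le_one θ, abs_nonneg R, abs_nonneg (Real.cos θ)]
    have h3 : ‖((n.factorial : ℕ):ℂ)‖ = ((n.factorial : ℕ):ℝ) := by
      rw [Complex.norm_natCast]
    rw [norm_div, norm_pow, h1, h3]
    gcongr
  have hSum : Summable fun n : ℕ => ∫ θ in Set.Ioc (0:ℝ) (2*π),
      ‖(Complex.I * ((R * Real.cos θ : ℝ):ℂ))^n / n.factorial‖ := by
    apply Summable.of_nonneg_of_le (fun n => integral_nonneg (fun θ => norm_nonneg _))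
      (fun n => ?_) (((Real.summable_pow_div_factorial |R|)).mul_left (2*π))
    calc (∫ θ in Set.Ioc (0:ℝ) (2*π), ‖(Complex.I * ((R * Real.cos θ : ℝ):ℂ))^n / n.factorial‖)
        ≤ ∫ _ in Set.Ioc (0:ℝ) (2*π), (|R|^n / n.factorial) := by
          apply integral_mono (hInt n).norm (integrable_const _)
          intro θ; exact hnorm n θ
      _ = (2*π) * (|R|^n / n.factorial) := by
          rw [setIntegral_const, measureReal_def, Real.volume_Ioc, smul_eq_mul, sub_zero, ENNReal.toReal_ofReal h2pi]
  rw [intervalIntegral.integral_of_le h2pi]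
  simp only [exp_eq_tsum']
  rw [← MeasureTheory.integral_tsum_of_summable_integral_norm hInt hSum]
  have hstep : ∀ n : ℕ, (∫ θ in Set.Ioc (0:ℝ) (2*π), (Complex.I * ((R * Real.cos θ : ℝ):ℂ))^n / n.factorial)
      = (Complex.I^n * (R:ℂ)^n / (n.factorial : ℂ)) *
        (if Even n then (((n.choose (n/2) : ℝ) * (2*π) / 2^n : ℝ) : ℂ) else 0) := by
    intro n
    rw [← intervalIntegral.integral_of_le h2pi, ← integral_cos_pow_complex n,
       ← intervalIntegral.integral_const_mul]
    apply intervalIntegral.integral_congr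
    intro θ _
    push_cast
    ring
  rw [tsum_congr hstep]
  have hsupp : Function.support (fun n:ℕ => (Complex.I^n * (R:ℂ)^n / (n.factorial : ℂ)) *
        (if Even n then (((n.choose (n/2) : ℝ) * (2*π) / 2^n : ℝ) : ℂ) else 0))
      ⊆ Set.range (fun m:ℕ => 2*m) := by
    intro n hn
    simp only [Function.mem_support] at hn
    by_cases he : Even n
    · obtain ⟨m, hm⟩ := he; exact ⟨m, by dsimp only; omega⟩
    · simp [he] at hn
  have hinj : Function.Injective (fun m:ℕ => 2*m) := fun x y h => by
    have : 2*x = 2*y := h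
    omega
  rw [← hinj.tsum_eq hsupp]
  have hterm : ∀ m : ℕ, (Complex.I^(2*m) * (R:ℂ)^(2*m) / (((2*m).factorial : ℕ) : ℂ)) *
        (if Even (2*m) then ((((2*m).choose ((2*m)/2) : ℝ) * (2*π) / 2^(2*m) : ℝ) : ℂ) else 0)
      = ((2*π * ((-1:ℝ)^m * (R/2)^(2*m) / (m.factorial * m.factorial)) : ℝ) : ℂ) := by
    intro m
    have he : Even (2*m) := even_two_mul m
    simp only [he, if_true]
    rw [show (2*m)/2 = m from by omega, pow_mul, Complex.I_sq]
    have hfactn := Nat.choose_mul_factorial_mul_factorial (show m ≤ 2*m by omega)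
    rw [show 2*m - m = m from by omega] at hfactn
    have hfactC : (((2*m).factorial : ℕ) : ℂ)
        = (((2*m).choose m : ℕ) : ℂ) * ((m.factorial : ℕ) : ℂ) * ((m.factorial : ℕ) : ℂ) := by
      exact_mod_cast congrArg (fun z : ℕ => (z:ℂ)) hfactn.symm
    have hm1 : ((m.factorial : ℕ) : ℂ) ≠ 0 := Nat.cast_ne_zero.mpr (Nat.factorial_ne_zero _)
    have hc : (((2*m).choose m : ℕ) : ℂ) ≠ 0 :=
      Nat.cast_ne_zero.mpr (Nat.choose_pos (by omega : m ≤ 2*m)).ne'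
    rw [hfactC]
    push_cast
    field_simp
    ring_nf
    simp [mul_assoc, ← mul_pow]
  rw [tsum_congr hterm]
  rw [← Complex.ofReal_tsum]
  rw [← tsum_mul_left]

lemma phase_reduce (a b φ : ℝ) :
    (∫ θ in (0:ℝ)..(2*π),
        Complex.exp (Complex.I * ((a * Real.cos (θ - φ) - b * Real.sin (θ - φ) : ℝ) : ℂ)))
      = ∫ θ in (0:ℝ)..(2*π),
          Complex.exp (Complex.I * ((Real.sqrt (a^2+b^2) * Real.cos θ : ℝ) : ℂ)) := by
  set g : ℝ → ℂ := fun t => Complex.exp (Complex.I * ((a * Real.cos t - b * Real.sin t : ℝ) : ℂ)) with hg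
  have hper : Function.Periodic g (2*π) := by
    intro t; simp only [hg, Real.cos_add_two_pi, Real.sin_add_two_pi]
  have h1 : (∫ θ in (0:ℝ)..(2*π), g (θ - φ)) = ∫ θ in (0:ℝ)..(2*π), g θ := by
    rw [intervalIntegral.integral_comp_sub_right g φ]
    have h2 := hper.intervalIntegral_add_eq (0 - φ) 0
    rw [show (0:ℝ) - φ + 2*π = 2*π - φ by ring] at h2
    rw [h2, zero_add]
  obtain ⟨δ, hδ⟩ : ∃ δ : ℝ, ∀ t, a * Real.cos t - b * Real.sin t
      = Real.sqrt (a^2+b^2) * Real.cos (t + δ) := by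
    by_cases hz : (a:ℂ) + b*Complex.I = 0
    · have ha : a = 0 := by
        have := congrArg Complex.re hz; simpa using this
      have hb : b = 0 := by
        have := congrArg Complex.im hz; simpa using this
      exact ⟨0, fun t => by simp [ha, hb]⟩
    · refine ⟨Complex.arg ((a:ℂ) + b*Complex.I), fun t => ?_⟩
      have habs : ‖(a:ℂ) + b*Complex.I‖ = Real.sqrt (a^2+b^2) := by
        rw [Complex.norm_def, Complex.normSq_add_mul_I]
      have habs0 : ‖(a:ℂ) + b*Complex.I‖ ≠ 0 := by
        simpa using hz
      have hc := Complex.cos_arg hz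
      have hs := Complex.sin_arg ((a:ℂ) + b*Complex.I)
      simp only [Complex.add_re, Complex.ofReal_re, Complex.mul_re, Complex.ofReal_im,
        Complex.I_re, Complex.I_im] at hc hs
      rw [Real.cos_add]
      have hre : ((a:ℂ) + b*Complex.I).re = a := by simp
      have him : ((a:ℂ) + b*Complex.I).im = b := by simp
      have hA : a = Real.sqrt (a^2+b^2) * Real.cos (Complex.arg ((a:ℂ) + b*Complex.I)) := by
        rw [Complex.cos_arg hz, hre, habs]
        field_simp [habs ▸ habs0]
      have hB : b = Real.sqrt (a^2+b^2) * Real.sin (Complex.arg ((a:ℂ) + b*Complex.I)) := by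
        rw [Complex.sin_arg, him, habs]
        field_simp [habs ▸ habs0]
      calc a * Real.cos t - b * Real.sin t
          = (Real.sqrt (a^2+b^2) * Real.cos (Complex.arg ((a:ℂ) + b*Complex.I))) * Real.cos t
            - (Real.sqrt (a^2+b^2) * Real.sin (Complex.arg ((a:ℂ) + b*Complex.I))) * Real.sin t := by
            rw [← hA, ← hB]
        _ = Real.sqrt (a^2+b^2) * (Real.cos t * Real.cos (Complex.arg ((a:ℂ) + b*Complex.I))
            - Real.sin t * Real.sin (Complex.arg ((a:ℂ) + b*Complex.I))) := by ring
  have h2 : (∫ θ in (0:ℝ)..(2*π), g θ)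
      = ∫ θ in (0:ℝ)..(2*π),
          Complex.exp (Complex.I * ((Real.sqrt (a^2+b^2) * Real.cos (θ+δ) : ℝ) : ℂ)) := by
    apply intervalIntegral.integral_congr
    intro θ _
    simp only [hg, hδ θ]
  have hper2 : Function.Periodic
      (fun θ:ℝ => Complex.exp (Complex.I * ((Real.sqrt (a^2+b^2) * Real.cos θ : ℝ) : ℂ))) (2*π) := by
    intro t; simp only [Real.cos_add_two_pi]
  have h3 : (∫ θ in (0:ℝ)..(2*π),
        Complex.exp (Complex.I * ((Real.sqrt (a^2+b^2) * Real.cos (θ+δ) : ℝ) : ℂ)))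
      = ∫ θ in (0:ℝ)..(2*π),
          Complex.exp (Complex.I * ((Real.sqrt (a^2+b^2) * Real.cos θ : ℝ) : ℂ)) := by
    rw [intervalIntegral.integral_comp_add_right
      (fun θ:ℝ => Complex.exp (Complex.I * ((Real.sqrt (a^2+b^2) * Real.cos θ : ℝ) : ℂ))) δ]
    have h4 := hper2.intervalIntegral_add_eq (0 + δ) 0
    rw [show (0:ℝ) + δ + 2*π = 2*π + δ by ring] at h4
    rw [h4, zero_add]
  rw [h1, h2, h3]

noncomputable def bterm (x : ℝ) (n : ℕ) (m : ℕ) : ℝ :=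
  (-1 : ℝ) ^ m * (x / 2) ^ (2 * m + n) / (m.factorial * (m + n).factorial)

lemma besselJ_eq_tsum_bterm (n : ℕ) (x : ℝ) : besselJ n x = ∑' m, bterm x n m := rfl

lemma bterm_abs (x : ℝ) (n m : ℕ) :
    |bterm x n m| = (|x|/2)^(2*m+n) / (m.factorial * (m+n).factorial) := by
  unfold bterm
  rw [abs_div, abs_mul, abs_pow, abs_pow, abs_neg, abs_one, one_pow, one_mul, abs_div]
  rw [abs_two]
  congr 1
  exact abs_of_nonneg (by positivity)

lemma bterm_summable (x : ℝ) (n : ℕ) : Summable (bterm x n) := by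
  have hmaj : Summable (fun m : ℕ => (|x|/2)^n * (((|x|/2)^2)^m / m.factorial)) :=
    ((Real.summable_pow_div_factorial ((|x|/2)^2))).mul_left ((|x|/2)^n)
  apply Summable.of_norm_bounded hmaj
  intro m
  rw [Real.norm_eq_abs, bterm_abs]
  have h1 : (|x|/2)^(2*m+n) = (|x|/2)^n * ((|x|/2)^2)^m := by
    rw [← pow_mul, ← pow_add]; ring_nf
  rw [h1]
  rw [mul_div_assoc]
  gcongr
  have h2 : (1:ℝ) ≤ ((m+n).factorial : ℝ) := by
    exact_mod_cast Nat.one_le_iff_ne_zero.mpr (Nat.factorial_ne_zero _)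
  nlinarith [show (0:ℝ) ≤ (m.factorial : ℝ) from by positivity]

lemma bterm_le (x : ℝ) (q r : ℕ) :
    |bterm x (2*q) r| ≤ ((|x|/2)^(2*q) / (2*q).factorial) * (((|x|/2)^2)^r / r.factorial) := by
  rw [bterm_abs]
  have h1 : (|x|/2)^(2*r+2*q) = (|x|/2)^(2*q) * ((|x|/2)^2)^r := by
    rw [← pow_mul, ← pow_add]; ring_nf
  rw [h1]
  rw [div_eq_mul_inv, mul_inv, div_eq_mul_inv, div_eq_mul_inv]
  push_cast
  have h2 : ((r + 2*q).factorial : ℝ)⁻¹ ≤ ((2*q).factorial : ℝ)⁻¹ := by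
    apply inv_anti₀
    · positivity
    · exact_mod_cast Nat.factorial_le (by omega)
  have h3 : (0:ℝ) ≤ (|x|/2)^(2*q) * ((|x|/2)^2)^r := by positivity
  have h4 : (0:ℝ) ≤ ((r.factorial:ℝ))⁻¹ := by positivity
  calc (|x|/2)^(2*q) * ((|x|/2)^2)^r * ((r.factorial:ℝ)⁻¹ * ((r+2*q).factorial:ℝ)⁻¹)
      ≤ (|x|/2)^(2*q) * ((|x|/2)^2)^r * ((r.factorial:ℝ)⁻¹ * ((2*q).factorial:ℝ)⁻¹) := by
        apply mul_le_mul_of_nonneg_left _ h3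
        exact mul_le_mul_of_nonneg_left h2 h4
    _ = (|x|/2)^(2*q) * ((2*q).factorial:ℝ)⁻¹ * (((|x|/2)^2)^r * (r.factorial:ℝ)⁻¹) := by ring

section main
variable (a b : ℝ)

noncomputable def Wf (a b : ℝ) : ℕ × (ℕ × ℕ) → ℝ := fun p =>
  (if p.1 = 0 then (1:ℝ) else 2) * (-1)^p.1 * (bterm a (2*p.1) p.2.1 * bterm b (2*p.1) p.2.2)

noncomputable def Gf (a b : ℝ) : (ℕ × ℕ) × ℕ → ℝ := fun x =>
  if x.2 ≤ x.1.1 ∧ x.2 ≤ x.1.2 then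
    (if x.2 = 0 then (1:ℝ) else 2) * (-1)^x.2 *
      (((-1:ℝ)^(x.1.1+x.1.2) * (a/2)^(2*x.1.1) * (b/2)^(2*x.1.2)) /
        (((x.1.1-x.2).factorial * (x.1.1+x.2).factorial : ℕ) *
          ((x.1.2-x.2).factorial * (x.1.2+x.2).factorial : ℕ)))
  else 0

noncomputable def cf (a b : ℝ) : ℕ × ℕ → ℝ := fun jk =>
  (-1:ℝ)^(jk.1+jk.2) * (a/2)^(2*jk.1) * (b/2)^(2*jk.2) /
    ((jk.1.factorial * jk.2.factorial : ℕ) * ((jk.1+jk.2).factorial : ℕ))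

lemma W_summable : Summable (Wf a b) := by
  have husum : Summable (fun q : ℕ => ((|a|/2)^2 * (|b|/2)^2)^q / q.factorial) :=
    Real.summable_pow_div_factorial _
  have hu : Summable (fun q : ℕ => ((|a|/2)^(2*q) / (2*q).factorial) * ((|b|/2)^(2*q) / (2*q).factorial)) := by
    apply Summable.of_nonneg_of_le (fun q => by positivity) (fun q => ?_) husum
    have h1 : ((|a|/2)^2 * (|b|/2)^2)^q = (|a|/2)^(2*q) * (|b|/2)^(2*q) := by
      rw [mul_pow, ← pow_mul, ← pow_mul]
    have hd : (q.factorial : ℝ) ≤ ((2*q).factorial : ℝ) * ((2*q).factorial : ℝ) := by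
      calc (q.factorial : ℝ) ≤ ((2*q).factorial : ℝ) := by
            exact_mod_cast Nat.factorial_le (by omega)
        _ = ((2*q).factorial : ℝ) * 1 := by ring
        _ ≤ ((2*q).factorial : ℝ) * ((2*q).factorial : ℝ) := by
            gcongr
            exact_mod_cast Nat.one_le_iff_ne_zero.mpr (Nat.factorial_ne_zero _)
    rw [h1, div_mul_div_comm]
    gcongr <;> first | positivity | exact hd
  have hv : Summable (fun r : ℕ => ((|a|/2)^2)^r / r.factorial) :=
    Real.summable_pow_div_factorial _
  have hw : Summable (fun s : ℕ => ((|b|/2)^2)^s / s.factorial) :=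
    Real.summable_pow_div_factorial _
  have hvw : Summable (fun rs : ℕ × ℕ => (((|a|/2)^2)^rs.1 / rs.1.factorial) * (((|b|/2)^2)^rs.2 / rs.2.factorial)) :=
    hv.mul_of_nonneg hw (fun r => by positivity) (fun s => by positivity)
  have hmaj : Summable (fun p : ℕ × (ℕ × ℕ) =>
      (2 * (((|a|/2)^(2*p.1) / (2*p.1).factorial) * ((|b|/2)^(2*p.1) / (2*p.1).factorial))) *
        ((((|a|/2)^2)^p.2.1 / p.2.1.factorial) * (((|b|/2)^2)^p.2.2 / p.2.2.factorial))) :=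
    (hu.mul_left 2).mul_of_nonneg hvw (fun q => by positivity) (fun rs => by positivity)
  apply Summable.of_norm_bounded hmaj
  rintro ⟨q, r, s⟩
  rw [Real.norm_eq_abs]
  have h1 : |Wf a b (q, (r, s))| ≤ 2 * (|bterm a (2*q) r| * |bterm b (2*q) s|) := by
    unfold Wf
    rw [abs_mul, abs_mul, abs_mul]
    have he : |if q = 0 then (1:ℝ) else 2| ≤ 2 := by split <;> norm_num
    have hp : |(-1:ℝ)^q| = 1 := by rw [abs_pow, abs_neg, abs_one, one_pow]
    rw [hp]
    calc |if q = 0 then (1:ℝ) else 2| * 1 * (|bterm a (2*q) r| * |bterm b (2*q) s|)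
        ≤ 2 * 1 * (|bterm a (2*q) r| * |bterm b (2*q) s|) := by
          apply mul_le_mul_of_nonneg_right (by linarith [he]) (by positivity)
      _ = 2 * (|bterm a (2*q) r| * |bterm b (2*q) s|) := by ring
  refine h1.trans ?_
  have h2 := bterm_le a q r
  have h3 := bterm_le b q s
  calc 2 * (|bterm a (2*q) r| * |bterm b (2*q) s|)
      ≤ 2 * ((((|a|/2)^(2*q) / (2*q).factorial) * (((|a|/2)^2)^r / r.factorial)) *
          (((|b|/2)^(2*q) / (2*q).factorial) * (((|b|/2)^2)^s / s.factorial))) := by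
        gcongr <;> first | exact abs_nonneg _ | exact h2 | exact h3
    _ = (2 * (((|a|/2)^(2*q) / (2*q).factorial) * ((|b|/2)^(2*q) / (2*q).factorial))) *
        ((((|a|/2)^2)^r / r.factorial) * (((|b|/2)^2)^s / s.factorial)) := by ring

lemma bterm_prod_summable (q : ℕ) :
    Summable (fun rs : ℕ × ℕ => bterm a (2*q) rs.1 * bterm b (2*q) rs.2) := by
  have habs : Summable (fun rs : ℕ × ℕ => |bterm a (2*q) rs.1| * |bterm b (2*q) rs.2|) :=
    (bterm_summable a (2*q)).abs.mul_of_nonneg (bterm_summable b (2*q)).abs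
      (fun r => abs_nonneg _) (fun s => abs_nonneg _)
  apply Summable.of_norm_bounded habs
  rintro ⟨r, s⟩
  rw [Real.norm_eq_abs]
  exact le_of_eq (abs_mul _ _)

lemma W_fiber (q : ℕ) :
    HasSum (fun rs : ℕ × ℕ => Wf a b (q, rs))
      ((if q = 0 then (1:ℝ) else 2) * (-1)^q * (besselJ (2*q) a * besselJ (2*q) b)) := by
  have hJa : HasSum (bterm a (2*q)) (besselJ (2*q) a) := by
    rw [besselJ_eq_tsum_bterm]; exact (bterm_summable a (2*q)).hasSum
  have hJb : HasSum (bterm b (2*q)) (besselJ (2*q) b) := by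
    rw [besselJ_eq_tsum_bterm]; exact (bterm_summable b (2*q)).hasSum
  exact (hJa.mul hJb (bterm_prod_summable a b q)).mul_left _

lemma gval_hasSum :
    HasSum (fun q : ℕ => (if q = 0 then (1:ℝ) else 2) * (-1)^q * (besselJ (2*q) a * besselJ (2*q) b))
      (∑' p, Wf a b p) :=
  (W_summable a b).hasSum.prod_fiberwise (W_fiber a b)

lemma G_comp_e (p : ℕ × (ℕ × ℕ)) : Gf a b ((p.1 + p.2.1, p.1 + p.2.2), p.1) = Wf a b p := by
  obtain ⟨q, r, s⟩ := p
  show Gf a b ((q + r, q + s), q) = _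
  unfold Gf Wf
  rw [if_pos ⟨Nat.le_add_right q r, Nat.le_add_right q s⟩]
  dsimp only
  rw [show q + r - q = r from by omega, show q + s - q = s from by omega,
      show q + r + q = r + 2*q from by omega, show q + s + q = s + 2*q from by omega,
      show 2*(q+r) = 2*r + 2*q from by ring, show 2*(q+s) = 2*s + 2*q from by ring,
      show (-1:ℝ)^(q + r + (q + s)) = (-1)^r * (-1)^s from by
        rw [show q + r + (q + s) = (r + s) + 2*q from by ring, pow_add, pow_mul, neg_one_sq,
          one_pow, mul_one, pow_add]]
  unfold bterm
  push_cast
  ring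

lemma G_supp : Function.support (Gf a b) ⊆
    Set.range (fun p : ℕ × (ℕ × ℕ) => ((p.1 + p.2.1, p.1 + p.2.2), p.1)) := by
  rintro ⟨⟨j, k⟩, q⟩ hx
  simp only [Function.mem_support] at hx
  by_cases hc : q ≤ j ∧ q ≤ k
  · exact ⟨(q, (j - q, k - q)), by
      dsimp only
      congr 1
      · congr 1 <;> omega⟩
  · exact absurd (by unfold Gf; rw [if_neg hc]) hx

lemma e_inj : Function.Injective (fun p : ℕ × (ℕ × ℕ) => ((p.1 + p.2.1, p.1 + p.2.2), p.1)) := by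
  rintro ⟨q, r, s⟩ ⟨q', r', s'⟩ h
  simp only [Prod.mk.injEq] at h
  obtain ⟨⟨h1, h2⟩, h3⟩ := h
  simp only [Prod.mk.injEq]
  refine ⟨h3, ?_, ?_⟩ <;> omega

lemma G_tsum : ∑' x, Gf a b x = ∑' p, Wf a b p := by
  rw [← (e_inj).tsum_eq (G_supp a b)]
  exact tsum_congr (G_comp_e a b)

lemma G_summable : Summable (Gf a b) := by
  apply ((e_inj).summable_iff (Function.support_subset_iff'.mp (G_supp a b))).mp
  exact (W_summable a b).congr (fun p => (G_comp_e a b p).symm)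

lemma G_fiber (j k : ℕ) :
    HasSum (fun q : ℕ => Gf a b ((j, k), q)) (cf a b (j, k)) := by
  have hfin : ∀ q ∉ Finset.range (min j k + 1), Gf a b ((j,k), q) = 0 := by
    intro q hq
    have hc : ¬ (q ≤ j ∧ q ≤ k) := by
      simp only [Finset.mem_range, Nat.lt_succ_iff, le_min_iff, not_le] at hq
      omega
    unfold Gf
    rw [if_neg (by exact hc)]
  have h := hasSum_sum_of_ne_finset_zero (L := SummationFilter.unconditional ℕ) hfin
  convert h using 1
  have hterm : ∀ q ∈ Finset.range (min j k + 1), Gf a b ((j,k), q)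
      = ((-1:ℝ)^(j+k) * (a/2)^(2*j) * (b/2)^(2*k)) *
        ((if q = 0 then (1:ℝ) else 2) * (-1:ℝ)^q /
          (((j-q).factorial * (j+q).factorial : ℕ) * ((k-q).factorial * (k+q).factorial : ℕ))) := by
    intro q hq
    have hq' : q ≤ min j k := Nat.lt_succ_iff.mp (Finset.mem_range.mp hq)
    have h1 : q ≤ j := le_trans hq' (min_le_left _ _)
    have h2 : q ≤ k := le_trans hq' (min_le_right _ _)
    unfold Gf
    rw [if_pos ⟨h1, h2⟩]
    dsimp only
    ring
  rw [Finset.sum_congr rfl hterm, ← Finset.mul_sum, identity_real j k]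
  unfold cf
  dsimp only
  rw [mul_one_div]

lemma cf_hasSum : HasSum (cf a b) (∑' p, Wf a b p) := by
  have h := (G_summable a b).hasSum
  rw [G_tsum a b] at h
  exact h.prod_fiberwise (fun jk => G_fiber a b jk.1 jk.2)

lemma sigma_eq_sum_antidiagonal (m : ℕ) :
    (-1:ℝ)^m * (Real.sqrt (a^2+b^2)/2)^(2*m) / (m.factorial * m.factorial)
      = ∑ jk ∈ Finset.HasAntidiagonal.antidiagonal m, cf a b jk := by
  rw [Finset.Nat.sum_antidiagonal_eq_sum_range_succ_mk]
  have hsq : (Real.sqrt (a^2+b^2)/2)^(2*m) = (a^2/4 + b^2/4)^m := by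
    rw [pow_mul, div_pow, Real.sq_sqrt (by positivity : (0:ℝ) ≤ a^2+b^2)]
    congr 1
    ring
  rw [hsq, add_pow]
  rw [mul_div_assoc, Finset.sum_div, Finset.mul_sum]
  apply Finset.sum_congr rfl
  intro l hl
  have hl' : l ≤ m := Nat.lt_succ_iff.mp (Finset.mem_range.mp hl)
  have e1 : l + (m - l) = m := by omega
  have hch : ((m.choose l : ℕ) : ℝ) * (l.factorial : ℕ) * ((m-l).factorial : ℕ)
      = (m.factorial : ℕ) := by
    exact_mod_cast congrArg (fun z : ℕ => (z:ℝ)) (Nat.choose_mul_factorial_mul_factorial hl')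
  unfold cf
  dsimp only
  rw [e1]
  rw [show (a^2/4 : ℝ) = (a/2)^2 from by ring, show (b^2/4 : ℝ) = (b/2)^2 from by ring,
      ← pow_mul, ← pow_mul]
  have hf1 : ((l.factorial : ℕ) : ℝ) ≠ 0 := Nat.cast_ne_zero.mpr (Nat.factorial_ne_zero _)
  have hf2 : (((m-l).factorial : ℕ) : ℝ) ≠ 0 := Nat.cast_ne_zero.mpr (Nat.factorial_ne_zero _)
  have hf3 : ((m.factorial : ℕ) : ℝ) ≠ 0 := Nat.cast_ne_zero.mpr (Nat.factorial_ne_zero _)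
  push_cast
  push_cast at hch
  rw [show ((m.choose l : ℕ):ℝ) = (m.factorial : ℝ) / ((l.factorial : ℝ) * ((m-l).factorial : ℝ)) from by
    rw [eq_div_iff (mul_ne_zero hf1 hf2)]
    push_cast
    linear_combination hch]
  field_simp

lemma sigma_hasSum :
    HasSum (fun m : ℕ => (-1:ℝ)^m * (Real.sqrt (a^2+b^2)/2)^(2*m) / (m.factorial * m.factorial))
      (∑' p, Wf a b p) := by
  have h1 : HasSum (fun x : (Σ n : ℕ, {x // x ∈ Finset.HasAntidiagonal.antidiagonal n}) => cf a b x.2.1)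
      (∑' p, Wf a b p) := by
    apply (Equiv.hasSum_iff Finset.HasAntidiagonal.sigmaAntidiagonalEquivProd).mpr (cf_hasSum a b)
  have hfib : ∀ n : ℕ, HasSum (fun c : {x // x ∈ Finset.HasAntidiagonal.antidiagonal n} => cf a b c.1)
      (∑ jk ∈ Finset.HasAntidiagonal.antidiagonal n, cf a b jk) := by
    intro n
    rw [← Finset.sum_coe_sort (Finset.HasAntidiagonal.antidiagonal n) (cf a b)]
    exact hasSum_fintype _
  have h2 := h1.sigma hfib
  have heq : (fun m : ℕ => (-1:ℝ)^m * (Real.sqrt (a^2+b^2)/2)^(2*m) / (m.factorial * m.factorial))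
      = fun n => ∑ jk ∈ Finset.HasAntidiagonal.antidiagonal n, cf a b jk :=
    funext (sigma_eq_sum_antidiagonal a b)
  rw [heq]
  exact h2

lemma series_rearrange :
    Summable (fun q : ℕ => (-1:ℝ)^(q+1) * besselJ (2*(q+1)) a * besselJ (2*(q+1)) b) ∧
    (∑' m : ℕ, (-1:ℝ)^m * (Real.sqrt (a^2+b^2)/2)^(2*m) / (m.factorial * m.factorial))
      = besselJ 0 a * besselJ 0 b
        + 2 * ∑' q : ℕ, (-1:ℝ)^(q+1) * besselJ (2*(q+1)) a * besselJ (2*(q+1)) b := by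
  have hg := gval_hasSum a b
  have hgs := hg.summable
  have hs1 : Summable (fun q : ℕ =>
      (if q+1 = 0 then (1:ℝ) else 2) * (-1)^(q+1) * (besselJ (2*(q+1)) a * besselJ (2*(q+1)) b)) :=
    (summable_nat_add_iff 1).mpr hgs
  have hterm1 : ∀ q : ℕ, (2⁻¹ : ℝ) * ((if q+1 = 0 then (1:ℝ) else 2) * (-1)^(q+1) *
      (besselJ (2*(q+1)) a * besselJ (2*(q+1)) b))
      = (-1:ℝ)^(q+1) * besselJ (2*(q+1)) a * besselJ (2*(q+1)) b := by
    intro q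
    rw [if_neg (Nat.succ_ne_zero q)]
    ring
  have hsumf : Summable (fun q : ℕ => (-1:ℝ)^(q+1) * besselJ (2*(q+1)) a * besselJ (2*(q+1)) b) :=
    (hs1.mul_left 2⁻¹).congr hterm1
  refine ⟨hsumf, ?_⟩
  rw [(sigma_hasSum a b).tsum_eq, ← hg.tsum_eq, Summable.tsum_eq_zero_add hgs]
  have h0 : (if (0:ℕ) = 0 then (1:ℝ) else 2) * (-1)^(0:ℕ) * (besselJ (2*0) a * besselJ (2*0) b)
      = besselJ 0 a * besselJ 0 b := by norm_num
  rw [h0]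
  congr 1
  have hterm2 : ∀ q : ℕ, (if q+1 = 0 then (1:ℝ) else 2) * (-1)^(q+1) *
      (besselJ (2*(q+1)) a * besselJ (2*(q+1)) b)
      = 2 * ((-1:ℝ)^(q+1) * besselJ (2*(q+1)) a * besselJ (2*(q+1)) b) := by
    intro q
    rw [if_neg (Nat.succ_ne_zero q)]
    ring
  rw [tsum_congr hterm2, tsum_mul_left]

end main

end Aux

theorem integral_exp_bistatic_phase (a b φ : ℝ) :
    (Summable fun q : ℕ =>
      (-1 : ℝ) ^ (q + 1) * besselJ (2 * (q + 1)) a * besselJ (2 * (q + 1)) b) ∧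
    (∫ θ in (0 : ℝ)..(2 * π),
        Complex.exp (Complex.I * ((a * Real.cos (θ - φ) - b * Real.sin (θ - φ) : ℝ) : ℂ))) =
      2 * π * besselJ 0 a * besselJ 0 b +
        4 * π * ((∑' q : ℕ,
          (-1 : ℝ) ^ (q + 1) * besselJ (2 * (q + 1)) a * besselJ (2 * (q + 1)) b : ℝ) : ℂ) := by
  obtain ⟨hsum, hser⟩ := series_rearrange a b
  refine ⟨hsum, ?_⟩
  rw [phase_reduce a b φ, integral_exp_I_cos (Real.sqrt (a^2+b^2)), hser]
  push_cast
  ring
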